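/- Let 0 < c ≤ 1 and σ² > 0, set a = σ²(1−√c)², b = σ²(1+√c)², and let f_{c,σ²}(t) = √((t−a)(b−t))/(2πcσ²t) on [a, b]. For any λ > σ²(1+√c), let ψ = λ(1 + cσ²/(λ−σ²)). Then ψ > b, and c·(ψ/σ² − 1)·∫_a^b t/(ψ − t) · f_{c,σ²}(t) dt = c + c²·(λ/σ²)/((λ/σ²) − 1)². -/

import Mathlib

open Real

lemma keyK (d : ℝ) (hd : 1 < d) :
    ∫ u in (-1:ℝ)..1, Real.sqrt (1 - u^2) / (d - u)
      = π * (d - Real.sqrt (d^2 - 1)) := by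
  set S : ℝ := Real.sqrt (d^2 - 1) with hS
  have hd2 : 0 < d^2 - 1 := by nlinarith
  have hSpos : 0 < S := Real.sqrt_pos.mpr hd2
  have hSsq : S^2 = d^2 - 1 := Real.sq_sqrt hd2.le
  set F : ℝ → ℝ := fun u => -Real.sqrt (1 - u^2) + d * Real.arcsin u
      - S * Real.arcsin ((d*u - 1)/(d - u)) with hF
  have hDne : ∀ u ∈ Set.Icc (-1:ℝ) 1, d - u ≠ 0 := by
    intro u hu; have := hu.2; nlinarith
  have hcont : ContinuousOn F (Set.Icc (-1:ℝ) 1) := by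
    apply ContinuousOn.sub
    · apply ContinuousOn.add
      · exact ((Real.continuous_sqrt.comp (by continuity)).continuousOn).neg
      · exact continuousOn_const.mul (Real.continuous_arcsin.comp continuous_id).continuousOn
    · apply ContinuousOn.mul continuousOn_const
      exact Real.continuous_arcsin.comp_continuousOn
        (ContinuousOn.div (by fun_prop) (by fun_prop) hDne)
  have hderiv : ∀ u ∈ Set.Ioo (-1:ℝ) 1,
      HasDerivAt F (Real.sqrt (1 - u^2) / (d - u)) u := by
    intro u hu
    have hu1 : -1 < u := hu.1
    have hu2 : u < 1 := hu.2
    have h1u : 0 < 1 - u^2 := by nlinarith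
    set s : ℝ := Real.sqrt (1 - u^2) with hs
    have hspos : 0 < s := Real.sqrt_pos.mpr h1u
    have hssq : s^2 = 1 - u^2 := Real.sq_sqrt h1u.le
    have hD : 0 < d - u := by nlinarith
    have hinner : HasDerivAt (fun u : ℝ => 1 - u^2) (-(2*u)) u := by
      simpa using ((hasDerivAt_pow 2 u).const_sub 1)
    have h1 : HasDerivAt (fun u : ℝ => Real.sqrt (1 - u^2)) (-u / s) u := by
      have := (Real.hasDerivAt_sqrt (ne_of_gt h1u)).comp u hinner
      refine this.congr_deriv ?_
      have hsne : s ≠ 0 := ne_of_gt hspos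
      rw [← hs]
      field_simp
    have h2 : HasDerivAt Real.arcsin (1 / s) u :=
      Real.hasDerivAt_arcsin (by linarith) (by linarith)
    set w : ℝ := (d*u - 1)/(d - u) with hw
    have hw2 : 1 - w^2 = (d^2 - 1) * (1 - u^2) / (d - u)^2 := by
      rw [hw]
      field_simp
      ring
    have hw2pos : 0 < 1 - w^2 := by
      rw [hw2]; positivity
    have hwD : HasDerivAt (fun u : ℝ => (d*u - 1)/(d - u)) ((d^2 - 1)/(d - u)^2) u := by
      have hnum : HasDerivAt (fun u : ℝ => d*u - 1) d u := by
        simpa using ((hasDerivAt_id u).const_mul d).sub_const 1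
      have hden : HasDerivAt (fun u : ℝ => d - u) (-1) u := by
        simpa using (hasDerivAt_id u).const_sub d
      have := hnum.div hden (ne_of_gt hD)
      refine this.congr_deriv ?_
      congr 1
      ring
    have hsw : Real.sqrt (1 - w^2) = S * s / (d - u) := by
      have he : (d^2 - 1) * (1 - u^2) / (d - u)^2 = (S * s / (d - u))^2 := by
        rw [div_pow, mul_pow, hSsq, hssq]
      rw [hw2, he, Real.sqrt_sq (by positivity)]
    have hw1 : w ≠ -1 := by
      intro h; rw [h] at hw2pos; norm_num at hw2pos
    have hw1' : w ≠ 1 := by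
      intro h; rw [h] at hw2pos; norm_num at hw2pos
    have h3 : HasDerivAt (fun u : ℝ => Real.arcsin ((d*u - 1)/(d - u)))
        (1 / Real.sqrt (1 - w^2) * ((d^2 - 1)/(d - u)^2)) u :=
      by have := (Real.hasDerivAt_arcsin hw1 hw1').comp u hwD; exact this
    have hFd : HasDerivAt F
        (-(-u / s) + d * (1 / s) - S * (1 / Real.sqrt (1 - w^2) * ((d^2 - 1)/(d - u)^2))) u := by
      exact ((h1.neg.add (h2.const_mul d)).sub (h3.const_mul S))
    convert hFd using 1
    rw [hsw]
    have hSne : S ≠ 0 := ne_of_gt hSpos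
    have hsne : s ≠ 0 := ne_of_gt hspos
    have hDne' : d - u ≠ 0 := ne_of_gt hD
    field_simp
    linear_combination hssq
  have hint : IntervalIntegrable (fun u => Real.sqrt (1 - u^2) / (d - u))
      MeasureTheory.volume (-1) 1 := by
    apply ContinuousOn.intervalIntegrable
    rw [Set.uIcc_of_le (by norm_num)]
    exact ContinuousOn.div (by fun_prop) (by fun_prop) hDne
  have := intervalIntegral.integral_eq_sub_of_hasDerivAt_of_le (by norm_num) hcont hderiv hint
  rw [this]
  have hdne : d - 1 ≠ 0 := by linarith
  have e1 : (d*1 - 1)/(d - 1) = 1 := by rw [mul_one]; exact div_self hdne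
  have e2 : (d*(-1) - 1)/(d - (-1)) = -1 := by
    rw [div_eq_iff (by linarith)]; ring
  simp only [hF, e1, e2, Real.arcsin_one, Real.arcsin_neg_one]
  rw [show (1:ℝ) - 1^2 = 0 by norm_num, show (1:ℝ) - (-1)^2 = 0 by norm_num, Real.sqrt_zero]
  ring

lemma keyJ (a b ψ : ℝ) (hab : a < b) (hψb : b < ψ) :
    ∫ t in a..b, Real.sqrt ((t-a)*(b-t))/(ψ-t)
      = π * (ψ - (a+b)/2 - Real.sqrt ((ψ-a)*(ψ-b))) := by
  set h : ℝ := (b-a)/2 with hh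
  set m : ℝ := (a+b)/2 with hm
  have hhpos : 0 < h := by rw [hh]; linarith
  set d : ℝ := (ψ - m)/h with hd
  have hd1 : 1 < d := by
    rw [hd, lt_div_iff₀ hhpos]; rw [hm, hh]; linarith
  have hψm : ψ - m = h * d := by rw [hd]; field_simp
  have hsub := intervalIntegral.integral_comp_mul_add
    (a := (-1:ℝ)) (b := 1) (fun t => Real.sqrt ((t-a)*(b-t))/(ψ-t)) (ne_of_gt hhpos) m
  have ea : h * (-1) + m = a := by rw [hh, hm]; ring
  have eb : h * 1 + m = b := by rw [hh, hm]; ring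
  rw [ea, eb] at hsub
  have hcongr : ∫ u in (-1:ℝ)..1,
      Real.sqrt ((h*u + m - a)*(b - (h*u + m)))/(ψ - (h*u + m))
      = ∫ u in (-1:ℝ)..1, Real.sqrt (1 - u^2) / (d - u) := by
    apply intervalIntegral.integral_congr
    intro u hu
    rw [Set.uIcc_of_le (by norm_num)] at hu
    have hu1 : -1 ≤ u := hu.1
    have hu2 : u ≤ 1 := hu.2
    have e1 : (h*u + m - a)*(b - (h*u + m)) = h^2 * (1 - u^2) := by
      rw [hh, hm]; ring
    have e2 : ψ - (h*u + m) = h * (d - u) := by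
      rw [mul_sub, ← hψm]; ring
    show Real.sqrt ((h*u + m - a)*(b - (h*u + m)))/(ψ - (h*u + m)) = Real.sqrt (1 - u^2) / (d - u)
    rw [e1, e2, Real.sqrt_mul (sq_nonneg h), Real.sqrt_sq hhpos.le]
    rw [mul_div_mul_left _ _ (ne_of_gt hhpos)]
  rw [hcongr, keyK d hd1] at hsub
  rw [smul_eq_mul, eq_comm, inv_mul_eq_iff_eq_mul₀ (ne_of_gt hhpos)] at hsub
  rw [hsub]
  have hsq : h * Real.sqrt (d^2 - 1) = Real.sqrt ((ψ-a)*(ψ-b)) := by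
    rw [← Real.sqrt_sq hhpos.le, ← Real.sqrt_mul (sq_nonneg h)]
    congr 1
    have : (ψ-a)*(ψ-b) = (ψ-m)^2 - h^2 := by rw [hm, hh]; ring
    rw [this, hψm]; ring
  rw [← hsq]
  linear_combination (-π) * hψm

/-- Explicit GIC increment at a distant spike under the simple spiked model: for
`0 < c ≤ 1`, `σ² > 0`, `λ > σ²(1+√c)` and `ψ = λ(1 + cσ²/(λ-σ²))`, one has `ψ > b` and
`c(ψ/σ² - 1) ∫_a^b t/(ψ-t) f_{c,σ²}(t) dt = c + c²(λ/σ²)/((λ/σ²)-1)²`, where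
`f_{c,σ²}(t) = √((t-a)(b-t))/(2πcσ²t)`, `a = σ²(1-√c)²`, `b = σ²(1+√c)²`. -/
theorem stmt10 (c s2 lam : ℝ) (hc : 0 < c) (hc1 : c ≤ 1) (hs2 : 0 < s2)
    (hlam : s2 * (1 + Real.sqrt c) < lam)
    (a b ψ : ℝ) (ha : a = s2 * (1 - Real.sqrt c) ^ 2) (hb : b = s2 * (1 + Real.sqrt c) ^ 2)
    (hψ : ψ = lam * (1 + c * s2 / (lam - s2))) :
    b < ψ ∧
    c * (ψ / s2 - 1) *
        ∫ t in a..b, t / (ψ - t) * (Real.sqrt ((t - a) * (b - t)) / (2 * Real.pi * c * s2 * t))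
      = c + c ^ 2 * (lam / s2) / (lam / s2 - 1) ^ 2 := by
  obtain ⟨r, hr0, rfl⟩ : ∃ r : ℝ, 0 < r ∧ r ^ 2 = c :=
    ⟨Real.sqrt c, Real.sqrt_pos.mpr hc, Real.sq_sqrt hc.le⟩
  rw [Real.sqrt_sq hr0.le] at hlam ha hb
  have hls : s2 * r < lam - s2 := by nlinarith
  have hls0 : 0 < lam - s2 := by nlinarith
  have hane : lam - s2 ≠ 0 := ne_of_gt hls0
  have hab : a < b := by rw [ha, hb]; nlinarith
  have ha0 : 0 ≤ a := by rw [ha]; positivity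
  have hψb : ψ - b = (lam - s2*(1 + r))^2/(lam - s2) := by
    rw [hψ, hb]; field_simp; ring
  have hbψ : b < ψ := by
    have h1 : 0 < (lam - s2*(1 + r))^2/(lam - s2) := by
      apply div_pos (by nlinarith) hls0
    linarith [hψb ▸ h1]
  refine ⟨hbψ, ?_⟩
  have hK : (0:ℝ) < 2 * π * r^2 * s2 := by positivity
  have hcongr : ∀ t ∈ Set.uIcc a b,
      t / (ψ - t) * (Real.sqrt ((t - a) * (b - t)) / (2 * Real.pi * r^2 * s2 * t))
        = (1/(2 * π * r^2 * s2)) * (Real.sqrt ((t - a) * (b - t)) / (ψ - t)) := by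
    intro t ht
    rw [Set.uIcc_of_le hab.le] at ht
    rcases eq_or_ne t 0 with rfl | htne
    · have ha0' : a = 0 := le_antisymm ht.1 ha0
      simp [ha0', Real.sqrt_eq_zero']
    · have hψt : ψ - t ≠ 0 := by
        have := ht.2; nlinarith
      field_simp
  rw [intervalIntegral.integral_congr hcongr, intervalIntegral.integral_const_mul,
    keyJ a b ψ hab hbψ]
  have hsqrt : Real.sqrt ((ψ - a)*(ψ - b)) = ((lam - s2)^2 - s2^2*r^2)/(lam - s2) := by
    have hψa : ψ - a = (lam - s2*(1 - r))^2/(lam - s2) := by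
      rw [hψ, ha]; field_simp; ring
    have he : (ψ - a)*(ψ - b) = (((lam - s2)^2 - s2^2*r^2)/(lam - s2))^2 := by
      rw [hψa, hψb]; field_simp; ring
    have hnn : 0 ≤ ((lam - s2)^2 - s2^2*r^2)/(lam - s2) := by
      apply div_nonneg _ hls0.le
      nlinarith
    rw [he, Real.sqrt_sq hnn]
  rw [hsqrt]
  have hab2 : a + b = 2*s2*(1 + r^2) := by rw [ha, hb]; ring
  rw [hab2, hψ]
  have hπ : π ≠ 0 := Real.pi_ne_zero
  field_simp
  ring
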